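/- Let f : X → Y be a mapping between normed spaces that admits at x̄ an outer ε-prederivative Φ : X ⇉ Y with α(Φ) > ε. Then f is strongly metrically subregular at x̄ and subreg f(x̄) ≤ 1/(α(Φ) − ε). If, in particular, Φ is an outer prederivative of f at x̄ with α(Φ) > 0, then the stricter estimate subreg f(x̄) ≤ 1/α(Φ) holds. -/

import Mathlib

open Filter Topology Metric Set ENNReal Pointwise

/-- Strong metric subregularity of a single-valued map between normed spaces at `xb`. -/
def IsStronglyMetricallySubregularMap {X Y : Type*}
    [NormedAddCommGroup X] [NormedAddCommGroup Y] (f : X → Y) (xb : X) : Prop :=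
  ∃ κ : ℝ, 0 ≤ κ ∧ ∃ r : ℝ, 0 < r ∧ ∀ x ∈ Metric.closedBall xb r,
    ‖x - xb‖ ≤ κ * ‖f x - f xb‖

/-- The modulus of subregularity of a single-valued map. -/
noncomputable def subregModMap {X Y : Type*}
    [NormedAddCommGroup X] [NormedAddCommGroup Y] (f : X → Y) (xb : X) : ℝ :=
  sInf {κ : ℝ | 0 ≤ κ ∧ ∃ r : ℝ, 0 < r ∧ ∀ x ∈ Metric.closedBall xb r,
    ‖x - xb‖ ≤ κ * ‖f x - f xb‖}

/-- The injectivity constant `α(Φ) = inf_{‖u‖=1} dist(0, Φ u)` of a set-valued map. -/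
noncomputable def injConstSV {X Y : Type*}
    [NormedAddCommGroup X] [NormedAddCommGroup Y] (Φ : X → Set Y) : ℝ≥0∞ :=
  ⨅ u : {u : X // ‖u‖ = 1}, EMetric.infEdist (0 : Y) (Φ u.1)

/-- `Φ` is an outer `ε`-prederivative of `f` at `xb`: there are `δ > 0` and a function
`r : δ·B_X → [0, ε]` with `f(xb + v) − f(xb) ∈ Φ(v) + r(v)‖v‖·B_Y` for all `‖v‖ ≤ δ`. -/
def IsOuterEpsPrederivative {X Y : Type*}
    [NormedAddCommGroup X] [NormedAddCommGroup Y]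
    (f : X → Y) (xb : X) (Φ : X → Set Y) (ε : ℝ) : Prop :=
  ∃ δ : ℝ, 0 < δ ∧ ∃ r : X → ℝ,
    (∀ v ∈ Metric.closedBall (0 : X) δ, r v ∈ Set.Icc 0 ε) ∧
    ∀ v ∈ Metric.closedBall (0 : X) δ,
      f (xb + v) - f xb ∈ Φ v + Metric.closedBall (0 : Y) (r v * ‖v‖)

/-- `Φ` is an outer prederivative of `f` at `xb`: as above, with `r(v) → 0` as `v → 0`. -/
def IsOuterPrederivative {X Y : Type*}
    [NormedAddCommGroup X] [NormedAddCommGroup Y]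
    (f : X → Y) (xb : X) (Φ : X → Set Y) : Prop :=
  ∃ δ : ℝ, 0 < δ ∧ ∃ r : X → ℝ,
    (∀ v ∈ Metric.closedBall (0 : X) δ, 0 ≤ r v) ∧
    Filter.Tendsto r (nhds (0 : X)) (nhds (0 : ℝ)) ∧
    ∀ v ∈ Metric.closedBall (0 : X) δ,
      f (xb + v) - f xb ∈ Φ v + Metric.closedBall (0 : Y) (r v * ‖v‖)

lemma aux_lower {X Y : Type*}
    [NormedAddCommGroup X] [NormedSpace ℝ X] [NormedAddCommGroup Y] [NormedSpace ℝ Y]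
    (Φ : X → Set Y) (hΦh : ∀ t : ℝ, 0 < t → ∀ x : X, Φ (t • x) = t • Φ x)
    (c : ℝ) (hc0 : 0 ≤ c) (hc : ENNReal.ofReal c ≤ injConstSV Φ) :
    ∀ v : X, ∀ y ∈ Φ v, c * ‖v‖ ≤ ‖y‖ := by
  intro v y hy
  rcases eq_or_ne v 0 with rfl | hv
  · simpa using norm_nonneg y
  · have ht : (0:ℝ) < ‖v‖ := norm_pos_iff.mpr hv
    set u : X := ‖v‖⁻¹ • v with hu_def
    have hu : ‖u‖ = 1 := by
      rw [hu_def, norm_smul, norm_inv, norm_norm, inv_mul_cancel₀ ht.ne']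
    have hΦv : Φ v = ‖v‖ • Φ u := by
      rw [← hΦh ‖v‖ ht u, hu_def, smul_inv_smul₀ ht.ne']
    rw [hΦv] at hy
    obtain ⟨z, hz, rfl⟩ := hy
    have h1 : injConstSV Φ ≤ EMetric.infEdist (0:Y) (Φ u) := iInf_le (fun u : {u : X // ‖u‖ = 1} => EMetric.infEdist (0:Y) (Φ u.1)) ⟨u, hu⟩
    have h2 : EMetric.infEdist (0:Y) (Φ u) ≤ edist (0:Y) z :=
      EMetric.infEdist_le_edist_of_mem hz
    have h3 : ENNReal.ofReal c ≤ ENNReal.ofReal ‖z‖ := by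
      calc ENNReal.ofReal c ≤ edist (0:Y) z := hc.trans (h1.trans h2)
        _ = ENNReal.ofReal ‖z‖ := by rw [edist_dist, dist_zero_left]
    have hcz : c ≤ ‖z‖ := (ENNReal.ofReal_le_ofReal_iff (norm_nonneg z)).mp h3
    rw [norm_smul, norm_norm]
    nlinarith [norm_nonneg z]

lemma aux_mem {X Y : Type*}
    [NormedAddCommGroup X] [NormedSpace ℝ X] [NormedAddCommGroup Y] [NormedSpace ℝ Y]
    (f : X → Y) (xb : X) (Φ : X → Set Y)
    (hΦh : ∀ t : ℝ, 0 < t → ∀ x : X, Φ (t • x) = t • Φ x)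
    (c η δ : ℝ) (hη : 0 ≤ η) (hcη : η < c) (hδ : 0 < δ)
    (hc : ENNReal.ofReal c ≤ injConstSV Φ)
    (r : X → ℝ)
    (hr : ∀ v ∈ Metric.closedBall (0 : X) δ, r v ≤ η)
    (hmem : ∀ v ∈ Metric.closedBall (0 : X) δ,
      f (xb + v) - f xb ∈ Φ v + Metric.closedBall (0 : Y) (r v * ‖v‖)) :
    (c - η)⁻¹ ∈ {κ : ℝ | 0 ≤ κ ∧ ∃ ρ : ℝ, 0 < ρ ∧ ∀ x ∈ Metric.closedBall xb ρ,
      ‖x - xb‖ ≤ κ * ‖f x - f xb‖} := by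
  have hcη' : 0 < c - η := by linarith
  refine ⟨inv_nonneg.mpr hcη'.le, δ, hδ, ?_⟩
  intro x hx
  set v : X := x - xb with hv_def
  have hvb : v ∈ Metric.closedBall (0 : X) δ := by
    simpa [hv_def, mem_closedBall, dist_zero_right, dist_eq_norm] using hx
  obtain ⟨y, hy, b, hb, heq⟩ := Set.mem_add.mp (hmem v hvb)
  have hxv : xb + v = x := by rw [hv_def]; abel
  have heq' : f x - f xb = y + b := by rw [← hxv]; exact heq.symm
  have hbn : ‖b‖ ≤ η * ‖v‖ := by
    have h1 : ‖b‖ ≤ r v * ‖v‖ := by simpa [mem_closedBall, dist_zero_right] using hb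
    have h2 : r v * ‖v‖ ≤ η * ‖v‖ :=
      mul_le_mul_of_nonneg_right (hr v hvb) (norm_nonneg v)
    linarith
  have hyn : c * ‖v‖ ≤ ‖y‖ := aux_lower Φ hΦh c (by linarith) hc v y hy
  have hyb : ‖y‖ ≤ ‖y + b‖ + ‖b‖ := by
    calc ‖y‖ = ‖(y + b) - b‖ := by rw [add_sub_cancel_right]
      _ ≤ ‖y + b‖ + ‖b‖ := norm_sub_le _ _
  have hN : (c - η) * ‖v‖ ≤ ‖f x - f xb‖ := by
    rw [heq']; nlinarith
  rw [inv_mul_eq_div, le_div_iff₀ hcη']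
  calc ‖x - xb‖ * (c - η) = (c - η) * ‖v‖ := by rw [hv_def]; ring
    _ ≤ ‖f x - f xb‖ := hN

/-- If `f` admits at `xb` an outer `ε`-prederivative `Φ` (positively
homogeneous) with `α(Φ) > ε`, then `f` is strongly metrically subregular at `xb` with
`subreg f(xb) ≤ 1/(α(Φ) − ε)`; if moreover `Φ` is an outer prederivative of `f` at
`xb`, the stricter estimate `subreg f(xb) ≤ 1/α(Φ)` holds. -/
theorem strong_subreg_of_outer_prederivative {X Y : Type*}
    [NormedAddCommGroup X] [NormedSpace ℝ X] [NormedAddCommGroup Y] [NormedSpace ℝ Y]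
    (f : X → Y) (xb : X) (Φ : X → Set Y) (hΦ0 : (0 : Y) ∈ Φ 0)
    (hΦh : ∀ t : ℝ, 0 < t → ∀ x : X, Φ (t • x) = t • Φ x)
    (ε : ℝ) (hε : 0 < ε) (hpre : IsOuterEpsPrederivative f xb Φ ε)
    (hα : ENNReal.ofReal ε < injConstSV Φ) :
    IsStronglyMetricallySubregularMap f xb ∧
    ENNReal.ofReal (subregModMap f xb) ≤ 1 / (injConstSV Φ - ENNReal.ofReal ε) ∧
    (IsOuterPrederivative f xb Φ →
      ENNReal.ofReal (subregModMap f xb) ≤ 1 / injConstSV Φ) := by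
  classical
  obtain ⟨δ, hδ, r, hr01, hmem⟩ := hpre
  set S : Set ℝ := {κ : ℝ | 0 ≤ κ ∧ ∃ ρ : ℝ, 0 < ρ ∧ ∀ x ∈ Metric.closedBall xb ρ,
      ‖x - xb‖ ≤ κ * ‖f x - f xb‖} with hS_def
  have hbdd : BddBelow S := ⟨0, fun κ hκ => hκ.1⟩
  -- key : membership from any valid c
  have key : ∀ c : ℝ, ε < c → ENNReal.ofReal c ≤ injConstSV Φ → (c - ε)⁻¹ ∈ S := by
    intro c hc1 hc2
    exact aux_mem f xb Φ hΦh c ε δ hε.le hc1 hδ hc2 r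
      (fun v hv => (hr01 v hv).2) hmem
  -- key2 : in the outer-prederivative case, from any valid c and any η > 0
  have key2 : IsOuterPrederivative f xb Φ → ∀ c η : ℝ, 0 < η → η < c →
      ENNReal.ofReal c ≤ injConstSV Φ → (c - η)⁻¹ ∈ S := by
    rintro ⟨δ', hδ', r', hr'0, hr'tend, hmem'⟩ c η hη hηc hc
    have hev : ∀ᶠ v in 𝓝 (0 : X), r' v < η :=
      hr'tend.eventually (Filter.Tendsto.eventually_lt_const hη tendsto_id)
    obtain ⟨δ₂, hδ₂, h2⟩ := Metric.eventually_nhds_iff.mp hev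
    set δ₃ : ℝ := min δ' (δ₂ / 2) with hδ₃_def
    have hδ₃ : 0 < δ₃ := lt_min hδ' (by linarith)
    have hsub : Metric.closedBall (0 : X) δ₃ ⊆ Metric.closedBall (0 : X) δ' :=
      Metric.closedBall_subset_closedBall (min_le_left _ _)
    refine aux_mem f xb Φ hΦh c η δ₃ hη.le hηc hδ₃ hc r' ?_
      (fun v hv => hmem' v (hsub hv))
    intro v hv
    have : dist v 0 < δ₂ := by
      have h1 : dist v 0 ≤ δ₃ := Metric.mem_closedBall.mp hv
      have h2' : δ₃ ≤ δ₂ / 2 := min_le_right _ _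
      linarith
    exact (h2 this).le
  -- exists some valid c
  obtain ⟨c1, hc1ε, hc1le⟩ : ∃ c : ℝ, ε < c ∧ ENNReal.ofReal c ≤ injConstSV Φ := by
    by_cases h : injConstSV Φ = ⊤
    · exact ⟨ε + 1, by linarith, by simp [h]⟩
    · refine ⟨(injConstSV Φ).toReal, ?_, le_of_eq (ENNReal.ofReal_toReal h)⟩
      have := hα
      rw [← ENNReal.ofReal_toReal h] at this
      exact (ENNReal.ofReal_lt_ofReal_iff_of_nonneg hε.le).mp this
  have hSne : S.Nonempty := ⟨_, key c1 hc1ε hc1le⟩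
  have hmod : subregModMap f xb = sInf S := rfl
  refine ⟨⟨_, key c1 hc1ε hc1le⟩, ?_, ?_⟩
  · -- second conjunct
    by_cases h : injConstSV Φ = ⊤
    · have hS0 : sInf S ≤ 0 := by
        apply _root_.le_of_forall_pos_le_add
        intro t ht
        have hmemS : (ε + t⁻¹ - ε)⁻¹ ∈ S :=
          key (ε + t⁻¹) (by linarith [inv_pos.mpr ht]) (by simp [h])
        have : sInf S ≤ (ε + t⁻¹ - ε)⁻¹ := csInf_le hbdd hmemS
        have he : (ε + t⁻¹ - ε)⁻¹ = t := by
          rw [add_sub_cancel_left, inv_inv]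
        linarith [he ▸ this]
      rw [hmod, ENNReal.ofReal_eq_zero.mpr hS0]
      exact zero_le
    · set c0 : ℝ := (injConstSV Φ).toReal with hc0_def
      have hc0eq : ENNReal.ofReal c0 = injConstSV Φ := ENNReal.ofReal_toReal h
      have hεc0 : ε < c0 := by
        have := hα; rw [← hc0eq] at this
        exact (ENNReal.ofReal_lt_ofReal_iff_of_nonneg hε.le).mp this
      have hle : sInf S ≤ (c0 - ε)⁻¹ := csInf_le hbdd (key c0 hεc0 hc0eq.le)
      rw [hmod]
      calc ENNReal.ofReal (sInf S) ≤ ENNReal.ofReal ((c0 - ε)⁻¹) :=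
            ENNReal.ofReal_le_ofReal hle
        _ = (ENNReal.ofReal (c0 - ε))⁻¹ := ENNReal.ofReal_inv_of_pos (by linarith)
        _ = (ENNReal.ofReal c0 - ENNReal.ofReal ε)⁻¹ := by
            rw [ENNReal.ofReal_sub _ hε.le]
        _ = 1 / (injConstSV Φ - ENNReal.ofReal ε) := by rw [hc0eq, one_div]
  · -- third conjunct
    intro hop
    by_cases h : injConstSV Φ = ⊤
    · have hS0 : sInf S ≤ 0 := by
        apply _root_.le_of_forall_pos_le_add
        intro t ht
        have hmemS : (ε + t⁻¹ - ε)⁻¹ ∈ S :=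
          key (ε + t⁻¹) (by linarith [inv_pos.mpr ht]) (by simp [h])
        have : sInf S ≤ (ε + t⁻¹ - ε)⁻¹ := csInf_le hbdd hmemS
        have he : (ε + t⁻¹ - ε)⁻¹ = t := by
          rw [add_sub_cancel_left, inv_inv]
        linarith [he ▸ this]
      rw [hmod, ENNReal.ofReal_eq_zero.mpr hS0]
      exact zero_le
    · set c0 : ℝ := (injConstSV Φ).toReal with hc0_def
      have hc0eq : ENNReal.ofReal c0 = injConstSV Φ := ENNReal.ofReal_toReal h
      have hεc0 : ε < c0 := by
        have := hα; rw [← hc0eq] at this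
        exact (ENNReal.ofReal_lt_ofReal_iff_of_nonneg hε.le).mp this
      have hc0pos : 0 < c0 := hε.trans hεc0
      have h1c : sInf S ≤ c0⁻¹ := by
        apply _root_.le_of_forall_pos_le_add
        intro t ht
        set η : ℝ := min (c0 / 2) (t * c0 ^ 2 / 2) with hη_def
        have hηpos : 0 < η := lt_min (by linarith) (by positivity)
        have hη1 : η ≤ c0 / 2 := min_le_left _ _
        have hη2 : η ≤ t * c0 ^ 2 / 2 := min_le_right _ _
        have hηc0 : η < c0 := by linarith
        have hle : sInf S ≤ (c0 - η)⁻¹ :=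
          csInf_le hbdd (key2 hop c0 η hηpos hηc0 hc0eq.le)
        have hpos : 0 < c0 - η := by linarith
        have hstep : (c0 - η)⁻¹ ≤ c0⁻¹ + t := by
          rw [inv_eq_one_div, div_le_iff₀ hpos]
          have hinv : c0⁻¹ * c0 = 1 := inv_mul_cancel₀ hc0pos.ne'
          have hA : t * η ≤ t * (c0 / 2) := mul_le_mul_of_nonneg_left hη1 ht.le
          have hB : η * c0⁻¹ ≤ (t * c0 ^ 2 / 2) * c0⁻¹ :=
            mul_le_mul_of_nonneg_right hη2 (inv_nonneg.mpr hc0pos.le)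
          have hC : (t * c0 ^ 2 / 2) * c0⁻¹ = t * c0 / 2 := by
            field_simp
          nlinarith
        linarith
      rw [hmod]
      calc ENNReal.ofReal (sInf S) ≤ ENNReal.ofReal (c0⁻¹) :=
            ENNReal.ofReal_le_ofReal h1c
        _ = (ENNReal.ofReal c0)⁻¹ := ENNReal.ofReal_inv_of_pos hc0pos
        _ = 1 / injConstSV Φ := by rw [hc0eq, one_div]
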